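/- Let a>0, α,β∈ℝ, λ∈ℂ, and let φ:[-a,a]→ℂ be twice continuously differentiable with −φ″(x)+2iαφ′(x)+α²φ(x)=λφ(x) for all x∈[-a,a], φ′(a)+βφ(a)=0 and φ′(−a)−βφ(−a)=0. Then −αβ²·(|φ(a)|²−|φ(−a)|²) = Im(λ)·( ∫_{−a}^{a}|φ′(x)|² dx + β(|φ(a)|²+|φ(−a)|²) ). -/

import Mathlib

open MeasureTheory intervalIntegral Set

private lemma star_mul_self' (z : ℂ) : star z * z = ((‖z‖ ^ 2 : ℝ) : ℂ) := by
  rw [Complex.star_def, ← Complex.normSq_eq_conj_mul_self]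
  norm_cast
  simp [Complex.normSq_eq_norm_sq]

private lemma bv1 (c : ℝ) (z : ℂ) :
    star ((c : ℂ) * z) * ((c : ℂ) * z) = ((c ^ 2 * ‖z‖ ^ 2 : ℝ) : ℂ) := by
  have h := star_mul_self' z
  rw [Complex.star_def] at h
  rw [star_mul']
  simp only [Complex.star_def, Complex.conj_ofReal, Complex.ofReal_mul, Complex.ofReal_pow]
  rw [Complex.ofReal_pow] at h
  linear_combination (c : ℂ) ^ 2 * h

private lemma bv2 (c : ℝ) (z : ℂ) :
    star ((c : ℂ) * z) * z = ((c * ‖z‖ ^ 2 : ℝ) : ℂ) := by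
  have h := star_mul_self' z
  rw [Complex.star_def] at h
  rw [star_mul']
  simp only [Complex.star_def, Complex.conj_ofReal, Complex.ofReal_mul, Complex.ofReal_pow]
  rw [Complex.ofReal_pow] at h
  linear_combination (c : ℂ) * h

/-- the identity
`-αβ²(|φ(a)|² - |φ(-a)|²) = Im λ · ( ∫|φ'|² + β(|φ(a)|² + |φ(-a)|²) )`
for solutions of the gauged problem with Robin boundary conditions. -/
theorem pt_second_integral_identity
    (a α β : ℝ) (ha : 0 < a) (lam : ℂ)
    (φ φ' φ'' : ℝ → ℂ)
    (hd1 : ∀ x ∈ Set.Icc (-a) a, HasDerivAt φ (φ' x) x)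
    (hd2 : ∀ x ∈ Set.Icc (-a) a, HasDerivAt φ' (φ'' x) x)
    (hcont : ContinuousOn φ'' (Set.Icc (-a) a))
    (hode : ∀ x ∈ Set.Icc (-a) a,
      -φ'' x + 2 * Complex.I * (α : ℂ) * φ' x + (α : ℂ) ^ 2 * φ x = lam * φ x)
    (hbc1 : φ' a + (β : ℂ) * φ a = 0)
    (hbc2 : φ' (-a) - (β : ℂ) * φ (-a) = 0) :
    -(α * β ^ 2) * (‖φ a‖ ^ 2 - ‖φ (-a)‖ ^ 2) =
      lam.im * ((∫ x in (-a)..a, ‖φ' x‖ ^ 2)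
        + β * (‖φ a‖ ^ 2 + ‖φ (-a)‖ ^ 2)) := by
  have hle : -a ≤ a := by linarith
  have huIcc : Set.uIcc (-a) a = Set.Icc (-a) a := Set.uIcc_of_le hle
  -- continuity on `uIcc`
  have hφc : ContinuousOn φ (Set.uIcc (-a) a) := by
    rw [huIcc]; exact fun x hx => ((hd1 x hx).continuousAt).continuousWithinAt
  have hφ'c : ContinuousOn φ' (Set.uIcc (-a) a) := by
    rw [huIcc]; exact fun x hx => ((hd2 x hx).continuousAt).continuousWithinAt
  have hφ''c : ContinuousOn φ'' (Set.uIcc (-a) a) := by rw [huIcc]; exact hcont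
  -- integrability
  have hiP : IntervalIntegrable (fun x => star (φ'' x) * φ x) volume (-a) a :=
    (hφ''c.star.mul hφc).intervalIntegrable
  have hiQ : IntervalIntegrable (fun x => star (φ'' x) * φ' x) volume (-a) a :=
    (hφ''c.star.mul hφ'c).intervalIntegrable
  have hiJ : IntervalIntegrable (fun x => star (φ' x) * φ' x) volume (-a) a :=
    (hφ'c.star.mul hφ'c).intervalIntegrable
  have hiS : IntervalIntegrable (fun x => star (φ'' x) * φ'' x) volume (-a) a :=
    (hφ''c.star.mul hφ''c).intervalIntegrable
  have hi2 : IntervalIntegrable φ'' volume (-a) a := hφ''c.intervalIntegrable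
  have hi2s : IntervalIntegrable (fun x => star (φ'' x)) volume (-a) a :=
    hφ''c.star.intervalIntegrable
  have hi1 : IntervalIntegrable φ' volume (-a) a := hφ'c.intervalIntegrable
  -- abbreviations
  set j : ℝ := ∫ x in (-a)..a, ‖φ' x‖ ^ 2 with hj
  set P : ℂ := ∫ x in (-a)..a, star (φ'' x) * φ x with hPdef
  set Q : ℂ := ∫ x in (-a)..a, star (φ'' x) * φ' x with hQdef
  -- boundary values
  have hba : φ' a = -((β : ℂ) * φ a) := by linear_combination hbc1
  have hbb : φ' (-a) = (β : ℂ) * φ (-a) := by linear_combination hbc2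
  have hbva : star (φ' a) * φ' a = ((β ^ 2 * ‖φ a‖ ^ 2 : ℝ) : ℂ) := by
    rw [hba, star_neg, neg_mul_neg]; exact bv1 β (φ a)
  have hbvb : star (φ' (-a)) * φ' (-a) = ((β ^ 2 * ‖φ (-a)‖ ^ 2 : ℝ) : ℂ) := by
    rw [hbb]; exact bv1 β (φ (-a))
  have hbpa : star (φ' a) * φ a = ((-(β * ‖φ a‖ ^ 2) : ℝ) : ℂ) := by
    rw [hba, star_neg, neg_mul, bv2 β (φ a), Complex.ofReal_neg]
  have hbpb : star (φ' (-a)) * φ (-a) = ((β * ‖φ (-a)‖ ^ 2 : ℝ) : ℂ) := by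
    rw [hbb]; exact bv2 β (φ (-a))
  -- J is real
  have hJ : (∫ x in (-a)..a, star (φ' x) * φ' x) = ((j : ℝ) : ℂ) := by
    rw [hj]
    rw [show (fun x => star (φ' x) * φ' x) = fun x => ((‖φ' x‖ ^ 2 : ℝ) : ℂ) from
      funext fun x => star_mul_self' (φ' x)]
    exact intervalIntegral.integral_ofReal
  -- S is real
  have hS : (∫ x in (-a)..a, star (φ'' x) * φ'' x)
      = (((∫ x in (-a)..a, ‖φ'' x‖ ^ 2 : ℝ)) : ℂ) := by
    rw [show (fun x => star (φ'' x) * φ'' x) = fun x => ((‖φ'' x‖ ^ 2 : ℝ) : ℂ) from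
      funext fun x => star_mul_self' (φ'' x)]
    exact intervalIntegral.integral_ofReal
  -- ∫ star φ' * φ'' = star Q
  have hQconj : (∫ x in (-a)..a, star (φ' x) * φ'' x) = star Q := by
    have hcomm := (Complex.conjCLE.toContinuousLinearMap :
      ℂ →L[ℝ] ℂ).intervalIntegral_comp_comm hiQ
    simp only [Complex.conjCLE_apply, ContinuousLinearEquiv.coe_coe] at hcomm
    calc (∫ x in (-a)..a, star (φ' x) * φ'' x)
        = ∫ x in (-a)..a, (starRingEnd ℂ) (star (φ'' x) * φ' x) := by
          apply intervalIntegral.integral_congr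
          intro x _
          simp [Complex.star_def, map_mul, mul_comm]
      _ = (starRingEnd ℂ) Q := hcomm
      _ = star Q := rfl
  -- integration by parts identities
  have E1 : Q + star Q = ((β ^ 2 * ‖φ a‖ ^ 2 - β ^ 2 * ‖φ (-a)‖ ^ 2 : ℝ) : ℂ) := by
    have h := intervalIntegral.integral_deriv_mul_eq_sub
      (u := fun x => star (φ' x)) (v := φ')
      (u' := fun x => star (φ'' x)) (v' := φ'')
      (fun x hx => (hd2 x (huIcc ▸ hx)).star) (fun x hx => hd2 x (huIcc ▸ hx)) hi2s hi2
    rw [intervalIntegral.integral_add hiQ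
      (show IntervalIntegrable (fun x => star (φ' x) * φ'' x) volume (-a) a from
        (hφ'c.star.mul hφ''c).intervalIntegrable)] at h
    rw [hQconj] at h
    rw [h, hbva, hbvb]; push_cast; ring
  have E2 : P + ((j : ℝ) : ℂ) = ((-(β * ‖φ a‖ ^ 2) - β * ‖φ (-a)‖ ^ 2 : ℝ) : ℂ) := by
    have h := intervalIntegral.integral_deriv_mul_eq_sub
      (u := fun x => star (φ' x)) (v := φ)
      (u' := fun x => star (φ'' x)) (v' := φ')
      (fun x hx => (hd2 x (huIcc ▸ hx)).star) (fun x hx => hd1 x (huIcc ▸ hx)) hi2s hi1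
    rw [intervalIntegral.integral_add hiP hiJ] at h
    rw [hJ] at h
    rw [h, hbpa, hbpb]; push_cast; ring
  -- main identity from the ODE
  have hmain : lam * P = -(((∫ x in (-a)..a, ‖φ'' x‖ ^ 2 : ℝ)) : ℂ)
      + 2 * Complex.I * (α : ℂ) * Q + (α : ℂ) ^ 2 * P := by
    have hcg : (∫ x in (-a)..a, lam * (star (φ'' x) * φ x))
        = ∫ x in (-a)..a,
          (-(star (φ'' x) * φ'' x) + 2 * Complex.I * (α : ℂ) * (star (φ'' x) * φ' x)
            + (α : ℂ) ^ 2 * (star (φ'' x) * φ x)) := by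
      apply intervalIntegral.integral_congr
      intro x hx
      have h := hode x (huIcc ▸ hx)
      calc lam * (star (φ'' x) * φ x) = star (φ'' x) * (lam * φ x) := by ring
        _ = star (φ'' x) * (-φ'' x + 2 * Complex.I * (α : ℂ) * φ' x + (α : ℂ) ^ 2 * φ x) := by
            rw [← h]
        _ = _ := by ring
    rw [intervalIntegral.integral_const_mul] at hcg
    have hiSneg : IntervalIntegrable (fun x => -(star (φ'' x) * φ'' x)) volume (-a) a := hiS.neg
    have hiQc : IntervalIntegrable
        (fun x => 2 * Complex.I * (α : ℂ) * (star (φ'' x) * φ' x)) volume (-a) a :=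
      hiQ.const_mul _
    have hiPc : IntervalIntegrable
        (fun x => (α : ℂ) ^ 2 * (star (φ'' x) * φ x)) volume (-a) a := hiP.const_mul _
    rw [intervalIntegral.integral_add (hiSneg.add hiQc) hiPc,
      intervalIntegral.integral_add hiSneg hiQc,
      intervalIntegral.integral_neg, intervalIntegral.integral_const_mul,
      intervalIntegral.integral_const_mul, hS] at hcg
    rw [hPdef, hQdef]
    exact hcg
  -- take real and imaginary parts
  have hQre : 2 * Q.re = β ^ 2 * ‖φ a‖ ^ 2 - β ^ 2 * ‖φ (-a)‖ ^ 2 := by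
    have h := congrArg Complex.re E1
    rw [Complex.add_re, Complex.star_def, Complex.conj_re, Complex.ofReal_re] at h
    linarith
  have hP : P = ((-(β * ‖φ a‖ ^ 2) - β * ‖φ (-a)‖ ^ 2 - j : ℝ) : ℂ) := by
    have : P = ((-(β * ‖φ a‖ ^ 2) - β * ‖φ (-a)‖ ^ 2 : ℝ) : ℂ) - ((j : ℝ) : ℂ) := by
      linear_combination E2
    rw [this]; push_cast; ring
  rw [hP] at hmain
  have him := congrArg Complex.im hmain
  simp only [Complex.mul_im, Complex.ofReal_re, Complex.ofReal_im, Complex.add_im,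
    Complex.neg_im, Complex.mul_re, Complex.I_re, Complex.I_im, Complex.ofReal_mul,
    Complex.re_ofNat, Complex.im_ofNat, Complex.ofReal_pow, mul_zero, zero_mul,
    mul_one, sub_zero, zero_sub, add_zero, zero_add, neg_zero, neg_neg] at him
  -- him is now a real equation; finish by linear algebra
  have ha2 : ((α : ℂ) ^ 2).im = 0 := by simp [pow_two]
  linear_combination him + α * hQre
    + (-(β * ‖φ a‖ ^ 2) - β * ‖φ (-a)‖ ^ 2 - j) * ha2
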